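/- Let A be a unital Banach algebra, A₀, B ∈ A with A₀ invertible, and L(x,t) = exp(A₀ x + A₀³ t) B. On the set where I ± L are invertible, V := (I - L²)⁻¹ (A₀ L + L A₀) satisfies the noncommutative mKdV equation V_t = V_xxx - 3 (V² V_x + V_x V²). -/

import Mathlib

variable {A : Type*} [NormedRing A] [NormedAlgebra ℝ A] [CompleteSpace A]

/-- partial derivative in the first (space) variable -/
noncomputable def px (Q : ℝ × ℝ → A) : ℝ × ℝ → A := fun p => deriv (fun x => Q (x, p.2)) p.1

/-- partial derivative in the second (time) variable -/
noncomputable def pt (Q : ℝ × ℝ → A) : ℝ × ℝ → A := fun p => deriv (fun t => Q (p.1, t)) p.2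

noncomputable def Wv (l : A) : A := Ring.inverse (1 - l * l)
noncomputable def Vv (a l : A) : A := (Wv l * ((a * l) + (l * a)))
noncomputable def V1v (a l : A) : A := ((((Wv l * (((a * l) * l) + (l * (a * l)))) * Wv l) * ((a * l) + (l * a))) + (Wv l * ((a * (a * l)) + ((a * l) * a))))
noncomputable def V2v (a l : A) : A := (((((((((Wv l * (((a * l) * l) + (l * (a * l)))) * Wv l) * (((a * l) * l) + (l * (a * l)))) + (Wv l * ((((a * (a * l)) * l) + ((a * l) * (a * l))) + (((a * l) * (a * l)) + (l * (a * (a * l))))))) * Wv l) + ((Wv l * (((a * l) * l) + (l * (a * l)))) * ((Wv l * (((a * l) * l) + (l * (a * l)))) * Wv l))) * ((a * l) + (l * a))) + (((Wv l * (((a * l) * l) + (l * (a * l)))) * Wv l) * ((a * (a * l)) + ((a * l) * a)))) + ((((Wv l * (((a * l) * l) + (l * (a * l)))) * Wv l) * ((a * (a * l)) + ((a * l) * a))) + (Wv l * ((a * (a * (a * l))) + ((a * (a * l)) * a)))))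
noncomputable def V3v (a l : A) : A := ((((((((((((((((Wv l * (((a * l) * l) + (l * (a * l)))) * Wv l) * (((a * l) * l) + (l * (a * l)))) + (Wv l * ((((a * (a * l)) * l) + ((a * l) * (a * l))) + (((a * l) * (a * l)) + (l * (a * (a * l))))))) * Wv l) + ((Wv l * (((a * l) * l) + (l * (a * l)))) * ((Wv l * (((a * l) * l) + (l * (a * l)))) * Wv l))) * (((a * l) * l) + (l * (a * l)))) + (((Wv l * (((a * l) * l) + (l * (a * l)))) * Wv l) * ((((a * (a * l)) * l) + ((a * l) * (a * l))) + (((a * l) * (a * l)) + (l * (a * (a * l))))))) + ((((Wv l * (((a * l) * l) + (l * (a * l)))) * Wv l) * ((((a * (a * l)) * l) + ((a * l) * (a * l))) + (((a * l) * (a * l)) + (l * (a * (a * l)))))) + (Wv l * (((((a * (a * (a * l))) * l) + ((a * (a * l)) * (a * l))) + (((a * (a * l)) * (a * l)) + ((a * l) * (a * (a * l))))) + ((((a * (a * l)) * (a * l)) + ((a * l) * (a * (a * l)))) + (((a * l) * (a * (a * l))) + (l * (a * (a * (a * l)))))))))) * Wv l) + (((((Wv l * (((a * l) * l) + (l * (a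 * l)))) * Wv l) * (((a * l) * l) + (l * (a * l)))) + (Wv l * ((((a * (a * l)) * l) + ((a * l) * (a * l))) + (((a * l) * (a * l)) + (l * (a * (a * l))))))) * ((Wv l * (((a * l) * l) + (l * (a * l)))) * Wv l))) + ((((((Wv l * (((a * l) * l) + (l * (a * l)))) * Wv l) * (((a * l) * l) + (l * (a * l)))) + (Wv l * ((((a * (a * l)) * l) + ((a * l) * (a * l))) + (((a * l) * (a * l)) + (l * (a * (a * l))))))) * ((Wv l * (((a * l) * l) + (l * (a * l)))) * Wv l)) + ((Wv l * (((a * l) * l) + (l * (a * l)))) * ((((((Wv l * (((a * l) * l) + (l * (a * l)))) * Wv l) * (((a * l) * l) + (l * (a * l)))) + (Wv l * ((((a * (a * l)) * l) + ((a * l) * (a * l))) + (((a * l) * (a * l)) + (l * (a * (a * l))))))) * Wv l) + ((Wv l * (((a * l) * l) + (l * (a * l)))) * ((Wv l * (((a * l) * l) + (l * (a * l)))) * Wv l)))))) * ((a * l) + (l * a))) + (((((((Wv l * (((a * l) * l) + (l * (a * l)))) * Wv l) * (((a * l) * l) + (l * (a * l)))) + (Wv l * ((((a * (a * l)) * l)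 + ((a * l) * (a * l))) + (((a * l) * (a * l)) + (l * (a * (a * l))))))) * Wv l) + ((Wv l * (((a * l) * l) + (l * (a * l)))) * ((Wv l * (((a * l) * l) + (l * (a * l)))) * Wv l))) * ((a * (a * l)) + ((a * l) * a)))) + ((((((((Wv l * (((a * l) * l) + (l * (a * l)))) * Wv l) * (((a * l) * l) + (l * (a * l)))) + (Wv l * ((((a * (a * l)) * l) + ((a * l) * (a * l))) + (((a * l) * (a * l)) + (l * (a * (a * l))))))) * Wv l) + ((Wv l * (((a * l) * l) + (l * (a * l)))) * ((Wv l * (((a * l) * l) + (l * (a * l)))) * Wv l))) * ((a * (a * l)) + ((a * l) * a))) + (((Wv l * (((a * l) * l) + (l * (a * l)))) * Wv l) * ((a * (a * (a * l))) + ((a * (a * l)) * a))))) + (((((((((Wv l * (((a * l) * l) + (l * (a * l)))) * Wv l) * (((a * l) * l) + (l * (a * l)))) + (Wv l * ((((a * (a * l)) * l) + ((a * l) * (a * l))) + (((a * l) * (a * l)) + (l * (a * (a * l))))))) * Wv l) + ((Wv l * (((a * l) * l) + (l * (a * l)))) * ((Wv l * (((a * l) * l) + (l * (a * l)))) * Wv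 l))) * ((a * (a * l)) + ((a * l) * a))) + (((Wv l * (((a * l) * l) + (l * (a * l)))) * Wv l) * ((a * (a * (a * l))) + ((a * (a * l)) * a)))) + ((((Wv l * (((a * l) * l) + (l * (a * l)))) * Wv l) * ((a * (a * (a * l))) + ((a * (a * l)) * a))) + (Wv l * ((a * (a * (a * (a * l)))) + ((a * (a * (a * l))) * a))))))
noncomputable def Vtv (a l : A) : A := ((((Wv l * (((a * (a * (a * l))) * l) + (l * (a * (a * (a * l)))))) * Wv l) * ((a * l) + (l * a))) + (Wv l * ((a * (a * (a * (a * l)))) + ((a * (a * (a * l))) * a))))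

lemma dW (a : A) (ℓ : ℝ → A) (x : ℝ) (m : A) (hl : HasDerivAt ℓ m x)
    (hu : IsUnit (1 - ℓ x * ℓ x)) :
    HasDerivAt (fun y => Wv (ℓ y)) ((Wv (ℓ x) * ((m * ℓ x) + (ℓ x * m))) * Wv (ℓ x)) x := by
  have hinner : HasDerivAt (fun y => 1 - ℓ y * ℓ y) (0 - (m * ℓ x + ℓ x * m)) x :=
    (hasDerivAt_const x (1:A)).sub (hl.mul hl)
  have hfd := hasFDerivAt_ringInverse (𝕜 := ℝ) hu.unit
  rw [hu.unit_spec] at hfd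
  have h := hfd.comp_hasDerivAt x hinner
  have hkey : (↑hu.unit⁻¹ : A) = Wv (ℓ x) := by
    rw [Wv]; conv_rhs => rw [← hu.unit_spec]
    exact (Ring.inverse_unit hu.unit).symm
  rw [show ((-ContinuousLinearMap.mulLeftRight ℝ A ↑hu.unit⁻¹ ↑hu.unit⁻¹ : A →L[ℝ] A)
      (0 - (m * ℓ x + ℓ x * m))) = (Wv (ℓ x) * ((m * ℓ x) + (ℓ x * m))) * Wv (ℓ x) from by
    simp only [ContinuousLinearMap.neg_apply, ContinuousLinearMap.mulLeftRight_apply, hkey]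
    noncomm_ring] at h
  exact h

section derivs
variable (a : A) (ℓ : ℝ → A) (x : ℝ)

lemma dVx (hl : HasDerivAt ℓ (a * ℓ x) x) (hu : IsUnit (1 - ℓ x * ℓ x)) :
    HasDerivAt (fun y => Vv a (ℓ y)) (V1v a (ℓ x)) x := by
  have hW := dW a ℓ x (a * ℓ x) hl hu
  exact (hW.mul ((hl.const_mul (a)).add (hl.mul_const (a))))

lemma dVt (hl : HasDerivAt ℓ (a * (a * (a * ℓ x))) x) (hu : IsUnit (1 - ℓ x * ℓ x)) :
    HasDerivAt (fun y => Vv a (ℓ y)) (Vtv a (ℓ x)) x := by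
  have hW := dW a ℓ x (a * (a * (a * ℓ x))) hl hu
  exact (hW.mul ((hl.const_mul (a)).add (hl.mul_const (a))))

lemma dV1 (hl : HasDerivAt ℓ (a * ℓ x) x) (hu : IsUnit (1 - ℓ x * ℓ x)) :
    HasDerivAt (fun y => V1v a (ℓ y)) (V2v a (ℓ x)) x := by
  have hW := dW a ℓ x (a * ℓ x) hl hu
  exact ((((hW.mul (((hl.const_mul (a)).mul hl).add (hl.mul (hl.const_mul (a))))).mul hW).mul ((hl.const_mul (a)).add (hl.mul_const (a)))).add (hW.mul (((hl.const_mul (a)).const_mul (a)).add ((hl.const_mul (a)).mul_const (a)))))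

lemma dV2 (hl : HasDerivAt ℓ (a * ℓ x) x) (hu : IsUnit (1 - ℓ x * ℓ x)) :
    HasDerivAt (fun y => V2v a (ℓ y)) (V3v a (ℓ x)) x := by
  have hW := dW a ℓ x (a * ℓ x) hl hu
  exact (((((((((hW.mul (((hl.const_mul (a)).mul hl).add (hl.mul (hl.const_mul (a))))).mul hW).mul (((hl.const_mul (a)).mul hl).add (hl.mul (hl.const_mul (a))))).add (hW.mul (((((hl.const_mul (a)).const_mul (a)).mul hl).add ((hl.const_mul (a)).mul (hl.const_mul (a)))).add (((hl.const_mul (a)).mul (hl.const_mul (a))).add (hl.mul ((hl.const_mul (a)).const_mul (a))))))).mul hW).add ((hW.mul (((hl.const_mul (a)).mul hl).add (hl.mul (hl.const_mul (a))))).mul ((hW.mul (((hl.const_mul (a)).mul hl).add (hl.mul (hl.const_mul (a))))).mul hW))).mul ((hl.const_mul (a)).add (hl.mul_const (a)))).add (((hW.mul (((hl.const_mul (a)).mul hl).add (hl.mul (hl.const_mul (a))))).mul hW).mul (((hl.const_mul (a)).const_mul (a)).add ((hl.const_mul (a)).mul_const (a))))).add ((((hW.mul (((hl.const_mul (a)).mul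 hl).add (hl.mul (hl.const_mul (a))))).mul hW).mul (((hl.const_mul (a)).const_mul (a)).add ((hl.const_mul (a)).mul_const (a)))).add (hW.mul ((((hl.const_mul (a)).const_mul (a)).const_mul (a)).add (((hl.const_mul (a)).const_mul (a)).mul_const (a))))))

end derivs

lemma keyAlg (a l : A) (hu : IsUnit (1 - l * l)) :
    Vtv a l = V3v a l - 3 * (Vv a l * Vv a l * V1v a l + V1v a l * (Vv a l * Vv a l)) := by
  have h1 : Wv l * (1 - l * l) = 1 := Ring.inverse_mul_cancel _ hu
  have h2 : (1 - l * l) * Wv l = 1 := Ring.mul_inverse_cancel _ hu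
  have hwl : Wv l * l = l * Wv l := by
    calc Wv l * l = Wv l * l * ((1 - l*l) * Wv l) := by rw [h2, mul_one]
    _ = (Wv l * (1 - l*l)) * (l * Wv l) := by noncomm_ring
    _ = l * Wv l := by rw [h1, one_mul]
  have r1 : ∀ y : A, Wv l * (l * y) = l * (Wv l * y) := fun y => by
    rw [← mul_assoc, hwl, mul_assoc]
  have r4 : l * (l * Wv l) = Wv l - 1 := by
    rw [show l * (l * Wv l) = Wv l - (1 - l*l) * Wv l from by noncomm_ring, h2]
  have r3 : ∀ y : A, l * (l * (Wv l * y)) = Wv l * y - y := fun y => by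
    rw [← mul_assoc, ← mul_assoc, mul_assoc l l (Wv l), r4, sub_mul, one_mul]
  simp only [Vtv, V3v, V2v, V1v, Vv, mul_add, add_mul, mul_sub, sub_mul, mul_one, one_mul,
    mul_assoc, r1, hwl, r3, r4]
  noncomm_ring

lemma expAddR {x y : A} (h : Commute x y) :
    NormedSpace.exp (x + y) = NormedSpace.exp x * NormedSpace.exp y :=
  NormedSpace.exp_add_of_commute_of_mem_ball (𝕂 := ℝ) h
    ((NormedSpace.expSeries_radius_eq_top ℝ A).symm ▸ edist_lt_top _ _)
    ((NormedSpace.expSeries_radius_eq_top ℝ A).symm ▸ edist_lt_top _ _)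

theorem stmt_10 (A₀ B : A) (hA : IsUnit A₀)
    (L : ℝ × ℝ → A) (hL : L = fun p : ℝ × ℝ => NormedSpace.exp (p.1 • A₀ + p.2 • A₀ ^ 3) * B) :
    ∀ p : ℝ × ℝ, IsUnit (1 + L p) → IsUnit (1 - L p) →
      pt (fun q => Ring.inverse (1 - L q * L q) * (A₀ * L q + L q * A₀)) p = px (px (px (fun q => Ring.inverse (1 - L q * L q) * (A₀ * L q + L q * A₀)))) p - 3 * ((fun q => Ring.inverse (1 - L q * L q) * (A₀ * L q + L q * A₀)) p * (fun q => Ring.inverse (1 - L q * L q) * (A₀ * L q + L q * A₀)) p * px (fun q => Ring.inverse (1 - L q * L q) * (A₀ * L q + L q * A₀)) p + px (fun q => Ring.inverse (1 - L q * L q) * (A₀ * L q + L q * A₀)) p * ((fun q => Ring.inverse (1 - L q * L q) * (A₀ * L q + L q * A₀)) p * (fun q => Ring.inverse (1 - L q * L q) * (A₀ * L q + L q * A₀)) p)) := by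
  have hcont : Continuous L := by
    rw [hL]
    exact ((continuous_iff_continuousAt.2 fun z => (NormedSpace.exp_analytic (𝕂 := ℝ) z).continuousAt).comp (by fun_prop)).mul continuous_const
  have hcomm : ∀ (s t : ℝ), Commute (s • A₀) (t • A₀ ^ 3) := fun s t =>
    (((Commute.refl A₀).pow_right 3).smul_left s).smul_right t
  have hLx : ∀ (s t : ℝ), HasDerivAt (fun x => L (x, t)) (A₀ * L (s, t)) s := by
    intro s t
    have hfun : (fun x => L (x, t)) =
        fun x => NormedSpace.exp (x • A₀) * (NormedSpace.exp (t • A₀ ^ 3) * B) := by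
      funext y; simp only [hL]
      rw [expAddR (hcomm y t), mul_assoc]
    have hval : A₀ * L (s, t) =
        (A₀ * NormedSpace.exp (s • A₀)) * (NormedSpace.exp (t • A₀ ^ 3) * B) := by
      simp only [hL]
      rw [expAddR (hcomm s t)]; noncomm_ring
    rw [hfun, hval]
    exact (hasDerivAt_exp_smul_const' (𝕂 := ℝ) A₀ s).mul_const _
  have hLt : ∀ (s t : ℝ), HasDerivAt (fun t' => L (s, t')) (A₀ * (A₀ * (A₀ * L (s, t)))) t := by
    intro s t
    have hfun : (fun t' => L (s, t')) =
        fun t' => NormedSpace.exp (t' • A₀ ^ 3) * (NormedSpace.exp (s • A₀) * B) := by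
      funext y; simp only [hL]
      rw [show s • A₀ + y • A₀ ^ 3 = y • A₀ ^ 3 + s • A₀ from add_comm _ _,
        expAddR (hcomm s y).symm, mul_assoc]
    have hval : A₀ * (A₀ * (A₀ * L (s, t))) =
        (A₀ ^ 3 * NormedSpace.exp (t • A₀ ^ 3)) * (NormedSpace.exp (s • A₀) * B) := by
      simp only [hL]
      rw [show s • A₀ + t • A₀ ^ 3 = t • A₀ ^ 3 + s • A₀ from add_comm _ _,
        expAddR (hcomm s t).symm]
      noncomm_ring
    rw [hfun, hval]
    exact (hasDerivAt_exp_smul_const' (𝕂 := ℝ) (A₀ ^ 3) t).mul_const _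
  intro p hp1 hp2
  obtain ⟨s, t⟩ := p
  have hu : IsUnit (1 - L (s, t) * L (s, t)) := by
    have h := hp2.mul hp1
    rwa [show (1 - L (s, t)) * (1 + L (s, t)) = 1 - L (s, t) * L (s, t) from by noncomm_ring] at h
  set F : ℝ × ℝ → A := fun q => Ring.inverse (1 - L q * L q) * (A₀ * L q + L q * A₀) with hF
  have hUopen : IsOpen {q : ℝ × ℝ | IsUnit (1 - L q * L q)} :=
    Units.isOpen.preimage (continuous_const.sub (hcont.mul hcont))
  have hpx1 : ∀ q : ℝ × ℝ, IsUnit (1 - L q * L q) → px F q = V1v A₀ (L q) := by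
    rintro ⟨s', t'⟩ hq
    exact (dVx A₀ (fun x => L (x, t')) s' (hLx s' t') hq).deriv
  have hpx2 : ∀ q : ℝ × ℝ, IsUnit (1 - L q * L q) → px (px F) q = V2v A₀ (L q) := by
    rintro ⟨s', t'⟩ hq
    have hc : Continuous fun x : ℝ => ((x, t') : ℝ × ℝ) := by fun_prop
    have hev : (fun x => px F (x, t')) =ᶠ[nhds s'] fun x => V1v A₀ (L (x, t')) :=
      Filter.eventually_of_mem ((hUopen.preimage hc).mem_nhds hq) fun x hx => hpx1 _ hx
    have h0 : px (px F) (s', t') = deriv (fun x => px F (x, t')) s' := rfl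
    rw [h0, hev.deriv_eq]
    exact (dV1 A₀ (fun x => L (x, t')) s' (hLx s' t') hq).deriv
  have hpx3 : px (px (px F)) (s, t) = V3v A₀ (L (s, t)) := by
    have hc : Continuous fun x : ℝ => ((x, t) : ℝ × ℝ) := by fun_prop
    have hev : (fun x => px (px F) (x, t)) =ᶠ[nhds s] fun x => V2v A₀ (L (x, t)) :=
      Filter.eventually_of_mem ((hUopen.preimage hc).mem_nhds hu) fun x hx => hpx2 _ hx
    have h0 : px (px (px F)) (s, t) = deriv (fun x => px (px F) (x, t)) s := rfl
    rw [h0, hev.deriv_eq]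
    exact (dV2 A₀ (fun x => L (x, t)) s (hLx s t) hu).deriv
  have hpt : pt F (s, t) = Vtv A₀ (L (s, t)) :=
    (dVt A₀ (fun t' => L (s, t')) t (hLt s t) hu).deriv
  rw [hpt, hpx3, hpx1 _ hu]
  have hFp : F (s, t) = Vv A₀ (L (s, t)) := rfl
  rw [hFp]
  exact keyAlg A₀ (L (s, t)) hu
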